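/- Consider a column of n rows taking values in a set of n_i distinct values, arranged so that equal values occupy consecutive rows (a sorted column). Let each value v be assigned an injective code(v) ∈ {0,1}^L, and suppose that for every two values that occur in consecutive (adjacent) runs of the column, the Hamming distance between their codes is exactly 2. Fix a word length w ≥ 1 with w dividing n, and for each bitmap position p ∈ {1,…,L} form the bitmap whose r-th bit is the p-th bit of the code of the value in row r. Define the storage cost of the L bitmaps as the total number of dirty words plus the total number of maximal runs of consecutive identical clean words (counted within each bitmap separately). Then the storage cost is at most 4·n_i + L. -/

import Mathlib

/-- Within bitmap `p`, word `q` is clean when all `w` of its bits are equal. -/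
def cleanWord (w : ℕ) (bit : ℕ → Bool) (q : ℕ) : Prop :=
  ∀ j ∈ Finset.range w, bit (q * w + j) = bit (q * w)

instance (w : ℕ) (bit : ℕ → Bool) (q : ℕ) : Decidable (cleanWord w bit q) := by
  unfold cleanWord; infer_instance

/-- Word `q` starts a maximal run of consecutive identical clean words in the bitmap
with bits `bit`: it is clean, and either it is the first word, or the previous word
is not clean, or the previous word is a clean word of the other kind. -/
def runStart (w : ℕ) (bit : ℕ → Bool) (q : ℕ) : Prop :=
  cleanWord w bit q ∧
    (q = 0 ∨ ¬ cleanWord w bit (q - 1) ∨ bit ((q - 1) * w) ≠ bit (q * w))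

instance (w : ℕ) (bit : ℕ → Bool) (q : ℕ) : Decidable (runStart w bit q) := by
  unfold runStart; infer_instance

lemma aux_wordle (w n q : ℕ) (hdvd : w ∣ n) (hq : q < n / w) : q * w + w ≤ n := by
  have h1 : (q + 1) * w ≤ (n / w) * w := Nat.mul_le_mul_right w hq
  rw [Nat.div_mul_cancel hdvd, Nat.add_mul, Nat.one_mul] at h1
  omega

lemma aux_dirty (w n : ℕ) (hw : 1 ≤ w) (hdvd : w ∣ n) (bit : ℕ → Bool) :
    ((Finset.range (n / w)).filter (fun q => ¬ cleanWord w bit q)).card ≤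
    (((Finset.range (n - 1)).filter (fun r => bit r ≠ bit (r + 1))).filter
      (fun r => r % w ≠ w - 1)).card := by
  classical
  set f : ℕ → ℕ := fun q =>
    if h : ∃ j, j < w ∧ bit (q * w + j) ≠ bit (q * w)
      then q * w + (Nat.find h - 1) else 0 with hf
  have main : ∀ q ∈ (Finset.range (n / w)).filter (fun q => ¬ cleanWord w bit q),
      (f q ∈ ((Finset.range (n - 1)).filter (fun r => bit r ≠ bit (r + 1))).filter
        (fun r => r % w ≠ w - 1)) ∧ f q / w = q := by
    intro q hq
    simp only [Finset.mem_filter, Finset.mem_range] at hq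
    obtain ⟨hq1, hq2⟩ := hq
    have hex : ∃ j, j < w ∧ bit (q * w + j) ≠ bit (q * w) := by
      unfold cleanWord at hq2
      push_neg at hq2
      obtain ⟨j, hj1, hj2⟩ := hq2
      exact ⟨j, Finset.mem_range.mp hj1, hj2⟩
    have hfq : f q = q * w + (Nat.find hex - 1) := by
      rw [hf]; simp only [dif_pos hex]
    set j0 := Nat.find hex with hj0
    have hspec : j0 < w ∧ bit (q * w + j0) ≠ bit (q * w) := Nat.find_spec hex
    have h0 : j0 ≠ 0 := by
      intro h
      apply hspec.2
      rw [h, Nat.add_zero]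
    have h0' : 1 ≤ j0 := Nat.one_le_iff_ne_zero.mpr h0
    have hmin : bit (q * w + (j0 - 1)) = bit (q * w) := by
      by_contra h
      exact Nat.find_min hex (by omega : j0 - 1 < j0) ⟨by omega, h⟩
    have hwn : q * w + w ≤ n := aux_wordle w n q hdvd hq1
    have hne : bit (f q) ≠ bit (f q + 1) := by
      rw [hfq]
      have : q * w + (j0 - 1) + 1 = q * w + j0 := by omega
      rw [this, hmin]
      exact fun h => hspec.2 h.symm
    have hmod : f q % w = j0 - 1 := by
      rw [hfq, Nat.add_comm, Nat.add_mul_mod_self_right]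
      exact Nat.mod_eq_of_lt (by omega)
    constructor
    · simp only [Finset.mem_filter, Finset.mem_range]
      refine ⟨⟨by omega, hne⟩, ?_⟩
      rw [hmod]; omega
    · rw [hfq, Nat.mul_comm, Nat.mul_add_div (by omega), Nat.div_eq_of_lt (by omega)]
      omega
  apply Finset.card_le_card_of_injOn f (fun q hq => (main q hq).1)
  intro q hq q' hq' heq
  have h1 := (main q (Finset.mem_coe.mp hq)).2
  have h2 := (main q' (Finset.mem_coe.mp hq')).2
  rw [← h1, ← h2, heq]

lemma aux_run (w n : ℕ) (hw : 1 ≤ w) (hdvd : w ∣ n) (bit : ℕ → Bool) :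
    ((Finset.range (n / w)).filter (fun q => runStart w bit q)).card ≤
    1 + ((Finset.range (n / w)).filter (fun q => ¬ cleanWord w bit q)).card
      + (((Finset.range (n - 1)).filter (fun r => bit r ≠ bit (r + 1))).filter
        (fun r => r % w = w - 1)).card := by
  classical
  set S := (Finset.range (n / w)).filter (fun q => runStart w bit q) with hS
  set S1 := S.filter (fun q => q ≠ 0 ∧ ¬ cleanWord w bit (q - 1)) with hS1
  set S2 := S.filter (fun q => q ≠ 0 ∧ cleanWord w bit (q - 1)) with hS2
  have hsub : S ⊆ insert 0 (S1 ∪ S2) := by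
    intro q hq
    rcases eq_or_ne q 0 with h | h
    · simp [h]
    · simp only [Finset.mem_insert, Finset.mem_union, hS1, hS2, Finset.mem_filter]
      by_cases hc : cleanWord w bit (q - 1)
      · exact Or.inr (Or.inr ⟨hq, h, hc⟩)
      · exact Or.inr (Or.inl ⟨hq, h, hc⟩)
  have hcard : S.card ≤ 1 + S1.card + S2.card := by
    calc S.card ≤ (insert 0 (S1 ∪ S2)).card := Finset.card_le_card hsub
    _ ≤ (S1 ∪ S2).card + 1 := Finset.card_insert_le _ _
    _ ≤ S1.card + S2.card + 1 := by
        have := Finset.card_union_le S1 S2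
        omega
    _ = 1 + S1.card + S2.card := by omega
  have h1 : S1.card ≤ ((Finset.range (n / w)).filter
      (fun q => ¬ cleanWord w bit q)).card := by
    apply Finset.card_le_card_of_injOn (fun q => q - 1)
    · intro q hq
      simp only [hS1, hS, Finset.coe_filter, Finset.mem_filter, Finset.mem_range, Set.mem_setOf_eq] at hq ⊢
      exact ⟨by omega, hq.2.2⟩
    · intro q hq q' hq' heq
      rw [Finset.mem_coe] at hq hq'
      simp only [hS1, hS, Finset.mem_filter, Finset.mem_range] at hq hq'
      have heq' : q - 1 = q' - 1 := heq
      omega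
  have h2 : S2.card ≤ (((Finset.range (n - 1)).filter (fun r => bit r ≠ bit (r + 1))).filter
      (fun r => r % w = w - 1)).card := by
    have main : ∀ q ∈ S2,
        (q * w - 1 ∈ ((Finset.range (n - 1)).filter (fun r => bit r ≠ bit (r + 1))).filter
          (fun r => r % w = w - 1)) := by
      intro q hq
      simp only [hS2, hS, Finset.mem_filter, Finset.mem_range] at hq
      obtain ⟨⟨hq1, hrs⟩, hq0, hclean⟩ := hq
      have hne : bit ((q - 1) * w) ≠ bit (q * w) := by
        rcases hrs.2 with h | h | h
        · exact absurd h hq0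
        · exact absurd hclean h
        · exact h
      have hwn : q * w + w ≤ n := aux_wordle w n q hdvd hq1
      have hq1' : 1 ≤ q := Nat.one_le_iff_ne_zero.mpr hq0
      have hsplit : (q - 1) * w + w = q * w := by
        have : (q - 1 + 1) * w = q * w := by rw [Nat.sub_add_cancel hq1']
        rw [← this, Nat.add_mul, Nat.one_mul]
      have hr : q * w - 1 = (q - 1) * w + (w - 1) := by omega
      have hbit : bit (q * w - 1) = bit ((q - 1) * w) := by
        rw [hr]
        exact hclean (w - 1) (Finset.mem_range.mpr (by omega))
      have hr1 : q * w - 1 + 1 = q * w := by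
        have : 1 ≤ q * w := Nat.one_le_iff_ne_zero.mpr
          (Nat.mul_ne_zero (by omega) (by omega))
        omega
      simp only [Finset.mem_filter, Finset.mem_range]
      refine ⟨⟨?_, ?_⟩, ?_⟩
      · omega
      · rw [hbit, hr1]; exact hne
      · rw [hr, Nat.add_comm, Nat.add_mul_mod_self_right]
        exact Nat.mod_eq_of_lt (by omega)
    apply Finset.card_le_card_of_injOn (fun q => q * w - 1) main
    intro q hq q' hq' heq
    rw [Finset.mem_coe] at hq hq'
    simp only [hS2, hS, Finset.mem_filter, Finset.mem_range] at hq hq'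
    simp only at heq
    have hwq : q * w + w ≤ n := aux_wordle w n q hdvd hq.1.1
    have hwq' : q' * w + w ≤ n := aux_wordle w n q' hdvd hq'.1.1
    have hq1 : 1 ≤ q := Nat.one_le_iff_ne_zero.mpr hq.2.1
    have hq1' : 1 ≤ q' := Nat.one_le_iff_ne_zero.mpr hq'.2.1
    have : q * w = q' * w := by
      have e1 : 0 < q * w := Nat.mul_pos (by omega) (by omega)
      have e2 : 0 < q' * w := Nat.mul_pos (by omega) (by omega)
      have heq' : q * w - 1 = q' * w - 1 := heq
      omega
    exact Nat.eq_of_mul_eq_mul_right (by omega) this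
  omega

theorem storage_cost_le_of_sorted_column (n nI L w : ℕ) (hw : 1 ≤ w) (hdvd : w ∣ n)
    (val : ℕ → Fin nI) (code : Fin nI → Fin L → Bool)
    (hinj : Function.Injective code)
    (hsorted : ∀ a b c : ℕ, a ≤ b → b ≤ c → c < n → val a = val c → val a = val b)
    (hadj : ∀ r : ℕ, r + 1 < n → val r ≠ val (r + 1) →
      hammingDist (code (val r)) (code (val (r + 1))) = 2) :
    (∑ p : Fin L,
      ((Finset.range (n / w)).filter (fun q =>
        ¬ cleanWord w (fun r => code (val r) p) q)).card)
    + (∑ p : Fin L,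
      ((Finset.range (n / w)).filter (fun q =>
        runStart w (fun r => code (val r) p) q)).card)
      ≤ 4 * nI + L := by
  classical
  set C : Fin L → Finset ℕ := fun p =>
    (Finset.range (n - 1)).filter (fun r => code (val r) p ≠ code (val (r + 1)) p) with hC
  -- per-bitmap bound
  have hper : ∀ p : Fin L,
      ((Finset.range (n / w)).filter (fun q =>
        ¬ cleanWord w (fun r => code (val r) p) q)).card
      + ((Finset.range (n / w)).filter (fun q =>
        runStart w (fun r => code (val r) p) q)).card
      ≤ 1 + 2 * (C p).card := by
    intro p
    have hd := aux_dirty w n hw hdvd (fun r => code (val r) p)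
    have hr := aux_run w n hw hdvd (fun r => code (val r) p)
    have hsplit := Finset.card_filter_add_card_filter_not
      (s := C p) (p := fun r => r % w = w - 1)
    have hfix : (C p).filter (fun a => ¬ a % w = w - 1)
        = (C p).filter (fun r => r % w ≠ w - 1) :=
      Finset.filter_congr (fun x _ => Iff.rfl)
    rw [hfix] at hsplit
    simp only [hC] at hsplit ⊢
    omega
  -- sum of |C p| equals 2 * number of boundaries
  set Bnd := (Finset.range (n - 1)).filter (fun r => val r ≠ val (r + 1)) with hBnd
  have hsum : ∑ p : Fin L, (C p).card = 2 * Bnd.card := by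
    have h1 : ∀ p : Fin L, (C p).card =
        ∑ r ∈ Finset.range (n - 1),
          (if code (val r) p ≠ code (val (r + 1)) p then 1 else 0) := by
      intro p
      rw [hC, Finset.card_filter]
    calc ∑ p : Fin L, (C p).card
        = ∑ p : Fin L, ∑ r ∈ Finset.range (n - 1),
            (if code (val r) p ≠ code (val (r + 1)) p then 1 else 0) := by
          exact Finset.sum_congr rfl fun p _ => h1 p
      _ = ∑ r ∈ Finset.range (n - 1), ∑ p : Fin L,
            (if code (val r) p ≠ code (val (r + 1)) p then 1 else 0) :=
          Finset.sum_comm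
      _ = ∑ r ∈ Finset.range (n - 1), (if val r = val (r + 1) then 0 else 2) := by
          apply Finset.sum_congr rfl
          intro r hr
          rw [Finset.mem_range] at hr
          rw [← Finset.card_filter]
          by_cases h : val r = val (r + 1)
          · rw [if_pos h]
            rw [Finset.card_eq_zero, Finset.filter_eq_empty_iff]
            intro p _
            rw [h]
            simp
          · rw [if_neg h]
            have := hadj r (by omega) h
            rw [hammingDist] at this
            exact this
      _ = 2 * Bnd.card := by
          rw [Finset.sum_ite, Finset.sum_const_zero, Finset.sum_const, Nat.zero_add,
            smul_eq_mul, Nat.mul_comm]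
  have hBndcard : Bnd.card ≤ nI := by
    have : Bnd.card ≤ (Finset.univ : Finset (Fin nI)).card := by
      apply Finset.card_le_card_of_injOn (fun r => val (r + 1))
        (fun r _ => Finset.mem_univ _)
      have key : ∀ r ∈ Bnd, ∀ r' ∈ Bnd, r < r' → val (r + 1) ≠ val (r' + 1) := by
        intro r hr r' hr' hlt heq
        simp only [hBnd, Finset.mem_filter, Finset.mem_range] at hr hr'
        have := hsorted (r + 1) r' (r' + 1) (by omega) (by omega) (by omega) heq
        exact hr'.2 (this.symm.trans heq)
      intro r hr r' hr' heq
      rcases lt_trichotomy r r' with h | h | h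
      · exact absurd heq (key r hr r' hr' h)
      · exact h
      · exact absurd heq.symm (key r' hr' r hr h)
    simpa using this
  -- combine
  have hfinal : ∑ p : Fin L,
      (((Finset.range (n / w)).filter (fun q =>
        ¬ cleanWord w (fun r => code (val r) p) q)).card
      + ((Finset.range (n / w)).filter (fun q =>
        runStart w (fun r => code (val r) p) q)).card)
      ≤ ∑ p : Fin L, (1 + 2 * (C p).card) :=
    Finset.sum_le_sum fun p _ => hper p
  rw [← Finset.sum_add_distrib]
  calc ∑ p : Fin L,
      (((Finset.range (n / w)).filter (fun q =>
        ¬ cleanWord w (fun r => code (val r) p) q)).card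
      + ((Finset.range (n / w)).filter (fun q =>
        runStart w (fun r => code (val r) p) q)).card)
      ≤ ∑ p : Fin L, (1 + 2 * (C p).card) := hfinal
    _ = L + 2 * ∑ p : Fin L, (C p).card := by
        rw [Finset.sum_add_distrib, Finset.sum_const, Finset.mul_sum]
        simp [Finset.mul_sum]
    _ = L + 2 * (2 * Bnd.card) := by rw [hsum]
    _ ≤ 4 * nI + L := by omega
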